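/- Assume π₂ ≠ 0 and π₄ ≠ 0. For (η,λ) ∈ F², set B_{η,λ} = B ∩ span{x^{α,i} : (α₂,α₄) = (η,λ), i₂ = i₄ = 0}. Then B_{0,0} is an abelian Lie subalgebra of B, each B_{η,λ} is a module over B_{0,0} under the adjoint action, and for (η,λ) ≠ (0,0) with (η,λ) in the image of α ↦ (α₂,α₄), the B_{0,0}-module B_{η,λ} is cyclic, and its generators are exactly the nonzero scalar multiples of the elements x^{α,0} with α ∈ Γ, (α₂,α₄) = (η,λ). -/

import Mathlib

namespace SuBlock

variable (F : Type*) [Field F]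

def sigmaV : Fin 4 → F := ![1, 0, 1, 0]

def deltaV (d : F) : Fin 4 → F := ![0, 0, d, 0]

/-- The data `(Γ, J, δ)` of the paper: `δ₃ ∈ F \ {0}`, `Γ ≤ F⁴` an additive subgroup
containing `σ = (1,0,1,0)` and `δ = (0,0,δ₃,0)`, with `ker π₄ ⊄ ker π₂` whenever `π₂ ≠ 0`,
and `J_p` encoded by `m p : Bool` (`J_p = ℕ` iff `m p = true`), with `J_q ≠ {0}`
whenever `π_q = 0`, for `q = 2,4`.  (Coordinates `1,2,3,4` are `Fin 4` indices `0,1,2,3`.) -/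
structure Datum where
  d3 : F
  d3_ne : d3 ≠ 0
  Γ : AddSubgroup (Fin 4 → F)
  m : Fin 4 → Bool
  sigma_mem : sigmaV F ∈ Γ
  delta_mem : deltaV F d3 ∈ Γ
  ker_cond : (∃ α ∈ Γ, α 1 ≠ 0) → ∃ α ∈ Γ, α 3 = 0 ∧ α 1 ≠ 0
  J2_cond : (∀ α ∈ Γ, α 1 = 0) → m 1 = true
  J4_cond : (∀ α ∈ Γ, α 3 = 0) → m 3 = true

variable {F}

/-- The monoid `J = J₁ × J₂ × J₃ × J₄ ⊆ ℕ⁴`, where `J_p = ℕ` if `m p = true` and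
`J_p = {0}` otherwise. -/
def Jmon (m : Fin 4 → Bool) : AddSubmonoid (Fin 4 → ℕ) where
  carrier := {i | ∀ p, m p = false → i p = 0}
  zero_mem' := fun p _ => rfl
  add_mem' := fun ha hb p hp => by
    simp only [Set.mem_setOf_eq] at ha hb
    simp [Pi.add_apply, ha p hp, hb p hp]

/-- The commutative associative algebra `A = A(Γ,J)`, the semigroup algebra of `Γ × J`
with basis `x^{α,i}`, `(α,i) ∈ Γ × J`. -/
abbrev Alg (D : Datum F) : Type _ := AddMonoidAlgebra F (↥D.Γ × ↥(Jmon D.m))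

/-- The basis element `x^{α,i}`. -/
noncomputable def X (D : Datum F) (g : ↥D.Γ × ↥(Jmon D.m)) : Alg D :=
  AddMonoidAlgebra.single g 1

/-- `i - 1_[p]` (truncated subtraction). -/
def subE {m : Fin 4 → Bool} (i : ↥(Jmon m)) (p : Fin 4) : ↥(Jmon m) :=
  ⟨i.1 - Pi.single p 1, fun q hq => by
    have h : i.1 q = 0 := i.2 q hq
    simp only [Pi.sub_apply, h, Nat.zero_sub]⟩

/-- `∂_p x^{α,i} = α_p x^{α,i} + i_p x^{α,i-1_[p]}` (coordinates are `Fin 4` indexed). -/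
noncomputable def Dmon (D : Datum F) (p : Fin 4) (g : ↥D.Γ × ↥(Jmon D.m)) : Alg D :=
  (g.1.1 p) • X D g + ((g.2.1 p : F)) • X D (g.1, subE g.2 p)

/-- The derivation `∂_p` of `A`, extended linearly from its values on the basis. -/
noncomputable def Dop (D : Datum F) (p : Fin 4) (u : Alg D) : Alg D :=
  Finsupp.sum u.coeff fun g c => c • Dmon D p g

/-- The Lie bracket (1.6):
`[u,v] = x^{σ,0}(∂₁(u)∂₂(v) − ∂₁(v)∂₂(u)) + (x^{δ,0}∂₃(u) + u)∂₄(v) − ∂₄(u)(x^{δ,0}∂₃(v) + v)`. -/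
noncomputable def br (D : Datum F) (u v : Alg D) : Alg D :=
  X D (⟨sigmaV F, D.sigma_mem⟩, 0) * (Dop D 0 u * Dop D 1 v - Dop D 0 v * Dop D 1 u)
    + (X D (⟨deltaV F D.d3, D.delta_mem⟩, 0) * Dop D 2 u + u) * Dop D 3 v
    - Dop D 3 u * (X D (⟨deltaV F D.d3, D.delta_mem⟩, 0) * Dop D 2 v + v)

/-- The derived subalgebra `B = [A,A]`, the span of all brackets. -/
noncomputable def Bspan (D : Datum F) : Submodule F (Alg D) :=
  Submodule.span F {w | ∃ u v : Alg D, w = br D u v}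


/-- `B_{η,λ} = B ∩ span{x^{α,i} : (α₂,α₄) = (η,λ), i₂ = i₄ = 0}`. -/
noncomputable def Bpart (D : Datum F) (e l : F) : Submodule F (Alg D) :=
  Bspan D ⊓ Submodule.span F {w : Alg D | ∃ (α : D.Γ) (i : ↥(Jmon D.m)),
    α.1 1 = e ∧ α.1 3 = l ∧ i.1 1 = 0 ∧ i.1 3 = 0 ∧ w = X D (α, i)}


section Aux

variable {F : Type*} [Field F]

lemma X_mul_X (D : Datum F) (g h : ↥D.Γ × ↥(Jmon D.m)) :
    X D g * X D h = X D (g + h) := by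
  simp [X, AddMonoidAlgebra.single_mul_single]

lemma Dop_eq (D : Datum F) (p : Fin 4) (u : Alg D) :
    Dop D p u = Finsupp.linearCombination F (Dmon D p) u.coeff := by
  rw [Dop, Finsupp.linearCombination_apply]

lemma Dop_X (D : Datum F) (p : Fin 4) (g : ↥D.Γ × ↥(Jmon D.m)) :
    Dop D p (X D g) = Dmon D p g := by
  rw [Dop_eq, X, AddMonoidAlgebra.coeff_single]
  rw [Finsupp.linearCombination_single, one_smul]

lemma Dop_add (D : Datum F) (p : Fin 4) (u v : Alg D) :
    Dop D p (u + v) = Dop D p u + Dop D p v := by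
  simp [Dop_eq]

lemma Dop_smul (D : Datum F) (p : Fin 4) (c : F) (u : Alg D) :
    Dop D p (c • u) = c • Dop D p u := by
  simp [Dop_eq]

lemma br_smul_left (D : Datum F) (c : F) (u v : Alg D) :
    br D (c • u) v = c • br D u v := by
  simp only [br, Dop_smul]
  simp only [Algebra.smul_def]; ring

lemma br_smul_right (D : Datum F) (c : F) (u v : Alg D) :
    br D u (c • v) = c • br D u v := by
  simp only [br, Dop_smul]
  simp only [Algebra.smul_def]; ring

lemma br_add_left (D : Datum F) (u u' v : Alg D) :
    br D (u + u') v = br D u v + br D u' v := by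
  simp only [br, Dop_add]; ring

lemma br_add_right (D : Datum F) (u v v' : Alg D) :
    br D u (v + v') = br D u v + br D u v' := by
  simp only [br, Dop_add]; ring

lemma br_zero_left (D : Datum F) (v : Alg D) : br D 0 v = 0 := by
  have := br_smul_left D 0 0 v
  simpa using this

lemma br_zero_right (D : Datum F) (u : Alg D) : br D u 0 = 0 := by
  have := br_smul_right D 0 u 0
  simpa using this


noncomputable def sE (D : Datum F) : ↥D.Γ := ⟨sigmaV F, D.sigma_mem⟩
noncomputable def dE (D : Datum F) : ↥D.Γ := ⟨deltaV F D.d3, D.delta_mem⟩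

lemma br_XX (D : Datum F) (a b : ↥D.Γ) (i j : ↥(Jmon D.m))
    (hi1 : i.1 1 = 0) (hi3 : i.1 3 = 0) (hj1 : j.1 1 = 0) (hj3 : j.1 3 = 0) :
    br D (X D (a,i)) (X D (b,j)) =
      (a.1 0 * b.1 1 - a.1 1 * b.1 0) • X D (sE D + (a+b), i+j)
    + ((b.1 1 * (i.1 0 : F)) • X D (sE D + (a+b), subE i 0 + j)
    - (a.1 1 * (j.1 0 : F)) • X D (sE D + (a+b), i + subE j 0))
    + ((a.1 2 * b.1 3 - a.1 3 * b.1 2) • X D (dE D + (a+b), i+j)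
    + ((b.1 3 * (i.1 2 : F)) • X D (dE D + (a+b), subE i 2 + j)
    - (a.1 3 * (j.1 2 : F)) • X D (dE D + (a+b), i + subE j 2))
    + (b.1 3 - a.1 3) • X D (a+b, i+j)) := by
  simp only [br, Dop_X, Dmon, hi1, hi3, hj1, hj3, Nat.cast_zero, zero_smul, add_zero]
  simp only [mul_add, add_mul, mul_sub, sub_mul, smul_mul_assoc, mul_smul_comm, X_mul_X,
    Prod.mk_add_mk, smul_smul, zero_add, add_zero, sE, dE]
  rw [add_comm b a, add_comm j i, add_comm (subE j 0) i,
    add_assoc (⟨deltaV F D.d3, D.delta_mem⟩ : ↥D.Γ) a b,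
    add_left_comm a (⟨deltaV F D.d3, D.delta_mem⟩ : ↥D.Γ) b]
  match_scalars <;> ring

def Vset (D : Datum F) (e l : F) : Set (Alg D) := {w : Alg D | ∃ (α : D.Γ) (i : ↥(Jmon D.m)),
    α.1 1 = e ∧ α.1 3 = l ∧ i.1 1 = 0 ∧ i.1 3 = 0 ∧ w = X D (α, i)}

noncomputable def spanV (D : Datum F) (e l : F) : Submodule F (Alg D) :=
  Submodule.span F (Vset D e l)

lemma Bpart_eq (D : Datum F) (e l : F) : Bpart D e l = Bspan D ⊓ spanV D e l := rfl

lemma subE_1 {D : Datum F} {i : ↥(Jmon D.m)} (hi : i.1 1 = 0) (p : Fin 4) :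
    (subE i p).1 1 = 0 := by
  simp [subE, hi]

lemma subE_3 {D : Datum F} {i : ↥(Jmon D.m)} (hi : i.1 3 = 0) (p : Fin 4) :
    (subE i p).1 3 = 0 := by
  simp [subE, hi]

lemma X_mem_V (D : Datum F) {e l : F} (α : D.Γ) (i : ↥(Jmon D.m))
    (h1 : α.1 1 = e) (h3 : α.1 3 = l) (hi1 : i.1 1 = 0) (hi3 : i.1 3 = 0) :
    X D (α, i) ∈ spanV D e l :=
  Submodule.subset_span ⟨α, i, h1, h3, hi1, hi3, rfl⟩

lemma Dop1_on_V (D : Datum F) (e l : F) {u : Alg D} (hu : u ∈ spanV D e l) :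
    Dop D 1 u = e • u := by
  induction hu using Submodule.span_induction with
  | mem w hw =>
    obtain ⟨α, i, h1, h3, hi1, hi3, rfl⟩ := hw
    rw [Dop_X, Dmon]
    simp [hi1, h1]
  | zero => simp [Dop_eq]
  | add x y _ _ hx hy => rw [Dop_add, hx, hy, smul_add]
  | smul c x _ hx => rw [Dop_smul, hx, smul_comm]

lemma Dop3_on_V (D : Datum F) (e l : F) {u : Alg D} (hu : u ∈ spanV D e l) :
    Dop D 3 u = l • u := by
  induction hu using Submodule.span_induction with
  | mem w hw =>
    obtain ⟨α, i, h1, h3, hi1, hi3, rfl⟩ := hw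
    rw [Dop_X, Dmon]
    simp [hi3, h3]
  | zero => simp [Dop_eq]
  | add x y _ _ hx hy => rw [Dop_add, hx, hy, smul_add]
  | smul c x _ hx => rw [Dop_smul, hx, smul_comm]

lemma mul_V (D : Datum F) {e l e' l' : F} {u v : Alg D}
    (hu : u ∈ spanV D e l) (hv : v ∈ spanV D e' l') : u * v ∈ spanV D (e+e') (l+l') := by
  induction hu using Submodule.span_induction with
  | mem w hw =>
    obtain ⟨α, i, h1, h3, hi1, hi3, rfl⟩ := hw
    induction hv using Submodule.span_induction with
    | mem w' hw' =>
      obtain ⟨β, k, g1, g3, gi1, gi3, rfl⟩ := hw'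
      rw [X_mul_X, Prod.mk_add_mk]
      refine X_mem_V D _ _ ?_ ?_ ?_ ?_ <;>
        simp [h1, h3, hi1, hi3, g1, g3, gi1, gi3]
    | zero => simp
    | add x y _ _ hx hy => rw [mul_add]; exact add_mem hx hy
    | smul c x _ hx => rw [mul_smul_comm]; exact Submodule.smul_mem _ c hx
  | zero => simp
  | add x y _ _ hx hy => rw [add_mul]; exact add_mem hx hy
  | smul c x _ hx => rw [smul_mul_assoc]; exact Submodule.smul_mem _ c hx

lemma Dop_on_V (D : Datum F) (p : Fin 4) {e l : F} {u : Alg D} (hu : u ∈ spanV D e l) :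
    Dop D p u ∈ spanV D e l := by
  induction hu using Submodule.span_induction with
  | mem w hw =>
    obtain ⟨α, i, h1, h3, hi1, hi3, rfl⟩ := hw
    rw [Dop_X, Dmon]
    exact add_mem (Submodule.smul_mem _ _ (X_mem_V D _ _ h1 h3 hi1 hi3))
      (Submodule.smul_mem _ _ (X_mem_V D _ _ h1 h3 (subE_1 hi1 p) (subE_3 hi3 p)))
  | zero => simp [Dop_eq]
  | add x y _ _ hx hy => rw [Dop_add]; exact add_mem hx hy
  | smul c x _ hx => rw [Dop_smul]; exact Submodule.smul_mem _ c hx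

lemma sigma1 : sigmaV F 1 = 0 := by simp [sigmaV]
lemma sigma3 : sigmaV F 3 = 0 := by simp [sigmaV]
lemma delta1 {d : F} : deltaV F d 1 = 0 := by simp [deltaV]
lemma delta3 {d : F} : deltaV F d 3 = 0 := by simp [deltaV]

lemma Xs_mem (D : Datum F) : X D (sE D, 0) ∈ spanV D 0 0 :=
  X_mem_V D _ _ sigma1 sigma3 rfl rfl

lemma Xd_mem (D : Datum F) : X D (dE D, 0) ∈ spanV D 0 0 :=
  X_mem_V D _ _ (delta1 (d := D.d3)) (delta3 (d := D.d3)) rfl rfl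

lemma br_V00 (D : Datum F) {u v : Alg D} (hu : u ∈ spanV D 0 0) (hv : v ∈ spanV D 0 0) :
    br D u v = 0 := by
  rw [br, Dop1_on_V D 0 0 hv, Dop3_on_V D 0 0 hv, Dop1_on_V D 0 0 hu, Dop3_on_V D 0 0 hu]
  simp

noncomputable def mfun (D : Datum F) (e l : F) (w : Alg D) : Alg D :=
  e • (X D (sE D, 0) * Dop D 0 w) + l • (X D (dE D, 0) * Dop D 2 w) + l • w

lemma br_eq_mfun_mul (D : Datum F) (e l : F) {w v : Alg D}
    (hw : w ∈ spanV D 0 0) (hv : v ∈ spanV D e l) : br D w v = mfun D e l w * v := by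
  rw [br, Dop1_on_V D 0 0 hw, Dop3_on_V D 0 0 hw, Dop1_on_V D e l hv, Dop3_on_V D e l hv, mfun]
  simp only [zero_smul, mul_zero, zero_mul, sub_zero, sE, dE]
  simp only [Algebra.smul_def]
  ring

lemma mfun_mem (D : Datum F) (e l : F) {w : Alg D} (hw : w ∈ spanV D 0 0) :
    mfun D e l w ∈ spanV D 0 0 := by
  have h1 : X D (sE D, 0) * Dop D 0 w ∈ spanV D 0 0 := by
    have := mul_V D (Xs_mem D) (Dop_on_V D 0 hw); simpa using this
  have h2 : X D (dE D, 0) * Dop D 2 w ∈ spanV D 0 0 := by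
    have := mul_V D (Xd_mem D) (Dop_on_V D 2 hw); simpa using this
  exact add_mem (add_mem (Submodule.smul_mem _ _ h1) (Submodule.smul_mem _ _ h2))
    (Submodule.smul_mem _ _ hw)

lemma tus (D : Datum F) [CharZero F] : TwoUniqueSums (↥D.Γ × ↥(Jmon D.m)) := by
  have h1 : TwoUniqueSums (↥D.Γ) :=
    TwoUniqueSums.of_injective_addHom ⟨(Subtype.val : ↥D.Γ → (Fin 4 → F)), fun _ _ => rfl⟩
      Subtype.val_injective inferInstance
  have h2 : TwoUniqueSums (↥(Jmon D.m)) :=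
    TwoUniqueSums.of_injective_addHom ⟨(Subtype.val : ↥(Jmon D.m) → (Fin 4 → ℕ)), fun _ _ => rfl⟩
      Subtype.val_injective inferInstance
  infer_instance

lemma mul_ne_single (D : Datum F) [CharZero F] {f g : Alg D} (hf : 2 ≤ f.coeff.support.card)
    {pt : ↥D.Γ × ↥(Jmon D.m)} {c : F} (hc : c ≠ 0) :
    f * g ≠ AddMonoidAlgebra.single pt c := by
  intro h
  have hg : g ≠ 0 := by
    rintro rfl
    rw [mul_zero] at h
    exact hc (AddMonoidAlgebra.single_eq_zero.mp h.symm)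
  have hB : 1 ≤ g.coeff.support.card := Finset.card_pos.mpr (Finsupp.support_nonempty_iff.mpr
    (by rwa [Ne, ← AddMonoidAlgebra.coeff_inj, AddMonoidAlgebra.coeff_zero] at hg))
  have hlt : 1 < f.coeff.support.card * g.coeff.support.card := by nlinarith
  obtain ⟨p, hp, q, hq, hne, hup, huq⟩ :=
    (tus D).uniqueAdd_of_one_lt_card hlt
  rw [Finset.mem_product] at hp hq
  have cp : (f * g).coeff (p.1 + p.2) = f.coeff p.1 * g.coeff p.2 :=
    AddMonoidAlgebra.coeff_mul_add_of_uniqueAdd hup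
  have cq : (f * g).coeff (q.1 + q.2) = f.coeff q.1 * g.coeff q.2 :=
    AddMonoidAlgebra.coeff_mul_add_of_uniqueAdd huq
  have hpne : (f * g).coeff (p.1 + p.2) ≠ 0 := by
    rw [cp]
    exact mul_ne_zero (Finsupp.mem_support_iff.mp hp.1) (Finsupp.mem_support_iff.mp hp.2)
  have hqne : (f * g).coeff (q.1 + q.2) ≠ 0 := by
    rw [cq]
    exact mul_ne_zero (Finsupp.mem_support_iff.mp hq.1) (Finsupp.mem_support_iff.mp hq.2)
  have hsne : p.1 + p.2 ≠ q.1 + q.2 := by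
    intro he
    exact hne (Prod.ext (hup hq.1 hq.2 he.symm).1.symm (hup hq.1 hq.2 he.symm).2.symm)
  rw [h] at hpne hqne
  rw [AddMonoidAlgebra.coeff_single, Finsupp.single_apply_ne_zero] at hpne hqne
  exact hsne (hpne.1.trans hqne.1.symm)

lemma supp_V (D : Datum F) (e l : F) {u : Alg D} (hu : u ∈ spanV D e l) :
    ∀ g ∈ u.coeff.support, g.1.1 1 = e ∧ g.1.1 3 = l ∧ g.2.1 1 = 0 ∧ g.2.1 3 = 0 := by
  classical
  induction hu using Submodule.span_induction with
  | mem w hw =>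
    obtain ⟨α, i, h1, h3, hi1, hi3, rfl⟩ := hw
    intro g hg
    rw [X, AddMonoidAlgebra.coeff_single, Finsupp.support_single_ne_zero _ one_ne_zero,
      Finset.mem_singleton] at hg
    subst hg
    exact ⟨h1, h3, hi1, hi3⟩
  | zero => simp
  | add x y _ _ hx hy =>
    intro g hg
    rcases Finset.mem_union.mp (Finsupp.support_add hg) with h | h
    · exact hx g h
    · exact hy g h
  | smul c x _ hx =>
    intro g hg
    exact hx g (Finsupp.support_smul hg)

lemma vand_mem {M : Type*} [CharZero F] [AddCommGroup M] [Module F M] (N : Submodule F M)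
    {n : ℕ} (c : Fin (n+1) → M)
    (h : ∀ b : Fin (n+1), (∑ d : Fin (n+1), ((b : ℕ) : F)^(d : ℕ) • c d) ∈ N) :
    ∀ d, c d ∈ N := by
  classical
  set v : Fin (n+1) → F := fun i => ((i : ℕ) : F) with hv
  set V : Matrix (Fin (n+1)) (Fin (n+1)) F := Matrix.vandermonde v with hV
  have hinj : Function.Injective v := by
    intro x y hxy
    have : ((x : ℕ) : F) = ((y : ℕ) : F) := hxy
    exact Fin.ext (Nat.cast_injective this)
  have hdet : V.det ≠ 0 := by
    rw [hV, Ne, Matrix.det_vandermonde_eq_zero_iff]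
    rintro ⟨x, y, hxy, hne⟩
    exact hne (hinj hxy)
  have hVV : V⁻¹ * V = 1 := Matrix.nonsing_inv_mul V (isUnit_iff_ne_zero.mpr hdet)
  intro d
  have key : (∑ i, (V⁻¹ d i) • (∑ e, V i e • c e)) = c d := by
    have : ∀ i, (V⁻¹ d i) • (∑ e, V i e • c e) = ∑ e, (V⁻¹ d i * V i e) • c e := by
      intro i
      rw [Finset.smul_sum]
      exact Finset.sum_congr rfl fun e _ => (smul_smul _ _ _)
    simp_rw [this]
    rw [Finset.sum_comm]
    have : ∀ e, (∑ i, (V⁻¹ d i * V i e) • c e) = ((V⁻¹ * V) d e) • c e := by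
      intro e
      rw [Matrix.mul_apply, ← Finset.sum_smul]
    simp_rw [this, hVV]
    simp [Matrix.one_apply]
  rw [← key]
  refine Submodule.sum_mem N fun i _ => Submodule.smul_mem N _ ?_
  have : (∑ e, V i e • c e) = ∑ e : Fin (n+1), ((i : ℕ) : F)^(e : ℕ) • c e := by
    refine Finset.sum_congr rfl fun e _ => ?_
    rw [hV, Matrix.vandermonde_apply]
  rw [this]
  exact h i

@[simp] lemma sE0 (D : Datum F) : (sE D).1 0 = 1 := by simp [sE, sigmaV]
@[simp] lemma sE1 (D : Datum F) : (sE D).1 1 = 0 := by simp [sE, sigmaV]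
@[simp] lemma sE2 (D : Datum F) : (sE D).1 2 = 1 := by simp [sE, sigmaV]
@[simp] lemma sE3 (D : Datum F) : (sE D).1 3 = 0 := by simp [sE, sigmaV]
@[simp] lemma dE0 (D : Datum F) : (dE D).1 0 = 0 := by simp [dE, deltaV]
@[simp] lemma dE1 (D : Datum F) : (dE D).1 1 = 0 := by simp [dE, deltaV]
@[simp] lemma dE2 (D : Datum F) : (dE D).1 2 = D.d3 := by simp [dE, deltaV]
@[simp] lemma dE3 (D : Datum F) : (dE D).1 3 = 0 := by simp [dE, deltaV]

lemma subE_same {D : Datum F} (k : ↥(Jmon D.m)) (p : Fin 4) :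
    (subE k p).1 p = k.1 p - 1 := by simp [subE]

lemma subE_other {D : Datum F} (k : ↥(Jmon D.m)) {p q : Fin 4} (h : q ≠ p) :
    (subE k p).1 q = k.1 q := by simp [subE, Pi.single_eq_of_ne h]

@[simp] lemma J0_coord (D : Datum F) (p : Fin 4) : (0 : ↥(Jmon D.m)).1 p = 0 := by simp

lemma mfun_smul (D : Datum F) (e l c : F) (w : Alg D) :
    mfun D e l (c • w) = c • mfun D e l w := by
  simp only [mfun, Dop_smul, mul_smul_comm, smul_mul_assoc, smul_smul]
  match_scalars <;> ring

lemma mfun_add (D : Datum F) (e l : F) (w w' : Alg D) :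
    mfun D e l (w + w') = mfun D e l w + mfun D e l w' := by
  simp only [mfun, Dop_add, mul_add, smul_add]
  abel

lemma mfun_X (D : Datum F) (e l : F) (g : D.Γ) (k : ↥(Jmon D.m)) :
    mfun D e l (X D (g,k)) = (e * g.1 0) • X D (sE D + g, k)
      + (e * (k.1 0 : F)) • X D (sE D + g, subE k 0)
      + (l * g.1 2) • X D (dE D + g, k)
      + (l * (k.1 2 : F)) • X D (dE D + g, subE k 2) + l • X D (g, k) := by
  rw [mfun, Dop_X, Dop_X, Dmon, Dmon]
  simp only [mul_add, mul_smul_comm, X_mul_X, Prod.mk_add_mk, add_zero, zero_add, smul_smul, sE, dE]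
  match_scalars <;> ring

noncomputable def Qe (D : Datum F) (γ : D.Γ) (k : ↥(Jmon D.m)) : Alg D :=
  γ.1 0 • X D (sE D + γ, k) + (k.1 0 : F) • X D (sE D + γ, subE k 0)

noncomputable def Pe (D : Datum F) (γ : D.Γ) (k : ↥(Jmon D.m)) : Alg D :=
  (2:F) • X D (γ, k) + γ.1 2 • X D (dE D + γ, k) + (k.1 2 : F) • X D (dE D + γ, subE k 2)

lemma PQ_repr (D : Datum F) (a γ : D.Γ) (hγ1 : γ.1 1 = 0) (hγ3 : γ.1 3 = 0)
    (k : ↥(Jmon D.m)) (hk1 : k.1 1 = 0) (hk3 : k.1 3 = 0) :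
    br D (X D (a,k)) (X D (γ - a, 0)) = (-(a.1 3)) • Pe D γ k + (-(a.1 1)) • Qe D γ k := by
  rw [br_XX D a (γ - a) k 0 hk1 hk3 (by simp) (by simp)]
  rw [show a + (γ - a) = γ by abel]
  simp only [Qe, Pe, J0_coord, Nat.cast_zero, mul_zero, zero_smul, add_zero, sub_zero,
    zero_sub, neg_zero, smul_smul]
  match_scalars <;> (push_cast [Pi.sub_apply]; try simp only [hγ1, hγ3]; ring)

lemma Qe_mem_B (D : Datum F) (h2 : ∃ α ∈ D.Γ, α 1 ≠ 0) (γ : D.Γ)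
    (hγ1 : γ.1 1 = 0) (hγ3 : γ.1 3 = 0) (k : ↥(Jmon D.m)) (hk1 : k.1 1 = 0) (hk3 : k.1 3 = 0) :
    Qe D γ k ∈ Bspan D := by
  obtain ⟨βv, hβΓ, hβ3, hβ1⟩ := D.ker_cond h2
  set β : D.Γ := ⟨βv, hβΓ⟩ with hβ
  have h := PQ_repr D β γ hγ1 hγ3 k hk1 hk3
  have hb3 : β.1 3 = 0 := hβ3
  rw [hb3, neg_zero, zero_smul, zero_add] at h
  have key : Qe D γ k = (-(β.1 1))⁻¹ • br D (X D (β,k)) (X D (γ - β,0)) := by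
    rw [h, smul_smul, inv_mul_cancel₀ (neg_ne_zero.mpr hβ1), one_smul]
  rw [key]
  exact Submodule.smul_mem _ _ (Submodule.subset_span ⟨_, _, rfl⟩)

lemma Pe_mem_B (D : Datum F) (h2 : ∃ α ∈ D.Γ, α 1 ≠ 0) (h4 : ∃ α ∈ D.Γ, α 3 ≠ 0) (γ : D.Γ)
    (hγ1 : γ.1 1 = 0) (hγ3 : γ.1 3 = 0) (k : ↥(Jmon D.m)) (hk1 : k.1 1 = 0) (hk3 : k.1 3 = 0) :
    Pe D γ k ∈ Bspan D := by
  obtain ⟨av, haΓ, ha3⟩ := h4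
  set a : D.Γ := ⟨av, haΓ⟩ with ha
  have h := PQ_repr D a γ hγ1 hγ3 k hk1 hk3
  have hQ := Qe_mem_B D h2 γ hγ1 hγ3 k hk1 hk3
  have hmem : (-(a.1 3)) • Pe D γ k ∈ Bspan D := by
    have he : (-(a.1 3)) • Pe D γ k
        = br D (X D (a,k)) (X D (γ - a,0)) - (-(a.1 1)) • Qe D γ k := by
      rw [h]; abel
    rw [he]
    exact sub_mem (Submodule.subset_span ⟨_, _, rfl⟩) (Submodule.smul_mem _ _ hQ)
  have h2m := Submodule.smul_mem _ (-(a.1 3))⁻¹ hmem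
  rwa [smul_smul, inv_mul_cancel₀ (neg_ne_zero.mpr ha3), one_smul] at h2m

lemma sum_coord1 (D : Datum F) (x y : D.Γ) : (x + y).1 1 = x.1 1 + y.1 1 := by
  push_cast; simp
lemma sum_coord3 (D : Datum F) (x y : D.Γ) : (x + y).1 3 = x.1 3 + y.1 3 := by
  push_cast; simp

lemma Qe_mem_V (D : Datum F) (γ : D.Γ) (hγ1 : γ.1 1 = 0) (hγ3 : γ.1 3 = 0)
    (k : ↥(Jmon D.m)) (hk1 : k.1 1 = 0) (hk3 : k.1 3 = 0) : Qe D γ k ∈ spanV D 0 0 := by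
  have c1 : (sE D + γ).1 1 = 0 := by rw [sum_coord1]; simp [hγ1]
  have c3 : (sE D + γ).1 3 = 0 := by rw [sum_coord3]; simp [hγ3]
  exact add_mem (Submodule.smul_mem _ _ (X_mem_V D _ _ c1 c3 hk1 hk3))
    (Submodule.smul_mem _ _ (X_mem_V D _ _ c1 c3 (subE_1 hk1 0) (subE_3 hk3 0)))

lemma Pe_mem_V (D : Datum F) (γ : D.Γ) (hγ1 : γ.1 1 = 0) (hγ3 : γ.1 3 = 0)
    (k : ↥(Jmon D.m)) (hk1 : k.1 1 = 0) (hk3 : k.1 3 = 0) : Pe D γ k ∈ spanV D 0 0 := by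
  have c1 : (dE D + γ).1 1 = 0 := by rw [sum_coord1]; simp [hγ1]
  have c3 : (dE D + γ).1 3 = 0 := by rw [sum_coord3]; simp [hγ3]
  exact add_mem (add_mem (Submodule.smul_mem _ _ (X_mem_V D _ _ hγ1 hγ3 hk1 hk3))
    (Submodule.smul_mem _ _ (X_mem_V D _ _ c1 c3 hk1 hk3)))
    (Submodule.smul_mem _ _ (X_mem_V D _ _ c1 c3 (subE_1 hk1 2) (subE_3 hk3 2)))

lemma Qe_zero_k (D : Datum F) (γ : D.Γ) :
    Qe D γ 0 = γ.1 0 • X D (sE D + γ, 0) := by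
  simp [Qe]

lemma Xmono_mem_B (D : Datum F) (α₀ : D.Γ) (eta lam : F)
    (hα1 : α₀.1 1 = eta) (hα3 : α₀.1 3 = lam) (hne : ¬(eta = 0 ∧ lam = 0)) :
    X D (α₀, 0) ∈ Bspan D := by
  by_cases hl : lam = 0
  · have he : eta ≠ 0 := fun h => hne ⟨h, hl⟩
    have hb1 : (α₀ - 2 • sE D).1 1 = eta := by push_cast; simp [hα1]
    have hb3 : (α₀ - 2 • sE D).1 3 = 0 := by push_cast; simp [hα3, hl]
    have h := br_XX D (sE D) (α₀ - 2 • sE D) 0 0 rfl rfl rfl rfl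
    rw [show sE D + (α₀ - 2 • sE D) = α₀ - sE D by abel] at h
    simp only [sE0, sE1, sE2, sE3, hb1, hb3, J0_coord, Nat.cast_zero, mul_zero, zero_mul,
      zero_smul, add_zero, zero_add, sub_zero, mul_one, one_mul, sub_self, smul_zero] at h
    rw [show sE D + (α₀ - sE D) = α₀ by abel] at h
    have key : X D (α₀, 0) = eta⁻¹ • br D (X D (sE D, 0)) (X D (α₀ - 2 • sE D, 0)) := by
      rw [h, smul_smul, inv_mul_cancel₀ he, one_smul]
    rw [key]
    exact Submodule.smul_mem _ _ (Submodule.subset_span ⟨_, _, rfl⟩)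
  · have h := br_XX D 0 α₀ 0 0 rfl rfl rfl rfl
    simp only [ZeroMemClass.coe_zero, Pi.zero_apply, J0_coord, Nat.cast_zero, mul_zero, zero_mul,
      zero_smul, add_zero, zero_add, sub_zero, zero_sub, neg_zero, smul_zero, hα3] at h
    have key : X D (α₀, 0) = lam⁻¹ • br D (X D (0, 0)) (X D (α₀, 0)) := by
      rw [h, smul_smul, inv_mul_cancel₀ hl, one_smul]
    rw [key]
    exact Submodule.smul_mem _ _ (Submodule.subset_span ⟨_, _, rfl⟩)

noncomputable def Gmod (D : Datum F) (α : D.Γ) (N : Submodule F (Alg D)) : Submodule F (Alg D) :=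
  spanV D 0 0 ⊓ Submodule.comap (LinearMap.mulLeft F (X D (α,0))) N

lemma G_one (D : Datum F) (α : D.Γ) (N : Submodule F (Alg D)) (hXN : X D (α,0) ∈ N) :
    (1 : Alg D) ∈ Gmod D α N := by
  constructor
  · exact X_mem_V D 0 0 (by simp) (by simp) rfl rfl
  · simpa [Submodule.mem_comap] using hXN

lemma G_V (D : Datum F) (α : D.Γ) (N : Submodule F (Alg D)) {a : Alg D}
    (ha : a ∈ Gmod D α N) : a ∈ spanV D 0 0 := ha.1

lemma G_N (D : Datum F) (α : D.Γ) (N : Submodule F (Alg D)) {a : Alg D}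
    (ha : a ∈ Gmod D α N) : X D (α,0) * a ∈ N := ha.2

lemma G_CL (D : Datum F) (eta lam : F) (α : D.Γ) (hα1 : α.1 1 = eta) (hα3 : α.1 3 = lam)
    (N : Submodule F (Alg D))
    (hcl : ∀ w ∈ Bpart D 0 0, ∀ v ∈ N, br D w v ∈ N) :
    ∀ w, w ∈ Bspan D → w ∈ spanV D 0 0 →
      ∀ a ∈ Gmod D α N, mfun D eta lam w * a ∈ Gmod D α N := by
  intro w hwB hwV a haG
  constructor
  · have := mul_V D (mfun_mem D eta lam hwV) haG.1
    simpa using this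
  · have hXa : X D (α,0) * a ∈ spanV D eta lam := by
      have := mul_V D (X_mem_V D α 0 hα1 hα3 rfl rfl) haG.1
      simpa using this
    have hkey : X D (α,0) * (mfun D eta lam w * a) = br D w (X D (α,0) * a) := by
      rw [br_eq_mfun_mul D eta lam hwV hXa]; ring
    show X D (α,0) * (mfun D eta lam w * a) ∈ N
    rw [hkey]
    exact hcl w (Submodule.mem_inf.mpr ⟨hwB, hwV⟩) _ haG.2

lemma stepA (D : Datum F) [CharZero F] (h2 : ∃ α ∈ D.Γ, α 1 ≠ 0)
    (eta lam : F) (hl : lam ≠ 0) (α : D.Γ) (hα1 : α.1 1 = eta) (hα3 : α.1 3 = lam)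
    (N : Submodule F (Alg D))
    (hcl : ∀ w ∈ Bpart D 0 0, ∀ v ∈ N, br D w v ∈ N) (hXN : X D (α,0) ∈ N) :
    ∀ ν : D.Γ, ν.1 1 = 0 → ν.1 3 = 0 → X D (ν, 0) ∈ Gmod D α N := by
  have CL := G_CL D eta lam α hα1 hα3 N hcl
  have h1G := G_one D α N hXN
  suffices H : ∀ μ : D.Γ, μ.1 1 = 0 → μ.1 3 = 0 → X D (μ + 2 • dE D, 0) ∈ Gmod D α N by
    intro ν hν1 hν3
    have := H (ν - 2 • dE D) (by push_cast; simp [hν1]) (by push_cast; simp [hν3])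
    rwa [show ν - 2 • dE D + 2 • dE D = ν by abel] at this
  intro μ hμ1 hμ3
  obtain ⟨aa, haa1, haa2⟩ : ∃ aa : ℕ, ((aa:F) - 1 ≠ 0 ∧ μ.1 0 - (aa:F) - 1 ≠ 0) := by
    by_cases h3 : μ.1 0 = (3:F)
    · refine ⟨3, by norm_num, ?_⟩
      rw [h3]; norm_num
    · exact ⟨2, by norm_num, fun hc => h3 (by linear_combination hc)⟩
  set cc0 : Alg D := (((aa:F) - 1) * (μ.1 0 - (aa:F) - 1)) •
      ((eta^2 * (aa:F) * (μ.1 0 - (aa:F))) • X D (μ + 2 • sE D, 0)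
      + (eta * lam * ((aa:F) * (μ.1 2 - (aa:F)) + (aa:F) * (μ.1 0 - (aa:F)))) • X D (μ + sE D + dE D, 0)
      + (eta * lam * μ.1 0) • X D (μ + sE D, 0)
      + (lam^2 * (aa:F) * (μ.1 2 - (aa:F))) • X D (μ + 2 • dE D, 0)
      + (lam^2 * μ.1 2) • X D (μ + dE D, 0)
      + (lam^2) • X D (μ, 0)) with hcc0
  set cc1 : Alg D := (((aa:F) - 1) * (μ.1 0 - (aa:F) - 1)) •
      ((eta * lam * D.d3 * (μ.1 0 - 2*(aa:F))) • X D (μ + sE D + dE D, 0)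
      + (lam^2 * D.d3 * (μ.1 2 - 2*(aa:F))) • X D (μ + 2 • dE D, 0)) with hcc1
  set cc2 : Alg D := (-(((aa:F) - 1) * (μ.1 0 - (aa:F) - 1) * (lam^2 * D.d3^2))) •
      X D (μ + 2 • dE D, 0) with hcc2
  have key : ∀ b : ℕ,
      mfun D eta lam (Qe D (aa • sE D + b • dE D - sE D) 0) * (mfun D eta lam (Qe D (μ - (aa • sE D + b • dE D) - sE D) 0) * 1)
        = cc0 + (b:F) • cc1 + ((b:F)^2) • cc2 := by
    intro b
    have e10 : ((aa • sE D + b • dE D - sE D) : D.Γ).1 0 = (aa:F) - 1 := by push_cast; simp [nsmul_eq_mul]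
    have e20 : ((μ - (aa • sE D + b • dE D) - sE D) : D.Γ).1 0 = μ.1 0 - (aa:F) - 1 := by push_cast; simp [nsmul_eq_mul]; try ring
    have f10 : ((sE D + (aa • sE D + b • dE D - sE D)) : D.Γ).1 0 = (aa:F) := by push_cast; simp [nsmul_eq_mul]
    have f12 : ((sE D + (aa • sE D + b • dE D - sE D)) : D.Γ).1 2 = (aa:F) + (b:F) * D.d3 := by
      push_cast; simp [nsmul_eq_mul]
    have f20 : ((sE D + (μ - (aa • sE D + b • dE D) - sE D)) : D.Γ).1 0 = μ.1 0 - (aa:F) := by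
      push_cast; simp [nsmul_eq_mul]; try ring
    have f22 : ((sE D + (μ - (aa • sE D + b • dE D) - sE D)) : D.Γ).1 2 = μ.1 2 - (aa:F) - (b:F) * D.d3 := by
      push_cast; simp [nsmul_eq_mul]; try ring
    rw [Qe_zero_k, Qe_zero_k, mfun_smul, mfun_smul, mfun_X, mfun_X, mul_one]
    rw [e10, e20, f10, f12, f20, f22]
    simp only [J0_coord, Nat.cast_zero, mul_zero, zero_smul, add_zero]
    simp only [add_mul, mul_add, smul_mul_assoc, mul_smul_comm, smul_smul, X_mul_X,
      Prod.mk_add_mk, zero_add]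
    rw [show (sE D + (sE D + (aa • sE D + b • dE D - sE D))) + (sE D + (sE D + (μ - (aa • sE D + b • dE D) - sE D))) = μ + 2 • sE D by abel,
      show (sE D + (sE D + (aa • sE D + b • dE D - sE D))) + (dE D + (sE D + (μ - (aa • sE D + b • dE D) - sE D))) = μ + sE D + dE D by abel,
      show (sE D + (sE D + (aa • sE D + b • dE D - sE D))) + (sE D + (μ - (aa • sE D + b • dE D) - sE D)) = μ + sE D by abel,
      show (dE D + (sE D + (aa • sE D + b • dE D - sE D))) + (sE D + (sE D + (μ - (aa • sE D + b • dE D) - sE D))) = μ + sE D + dE D by abel,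
      show (dE D + (sE D + (aa • sE D + b • dE D - sE D))) + (dE D + (sE D + (μ - (aa • sE D + b • dE D) - sE D))) = μ + 2 • dE D by abel,
      show (dE D + (sE D + (aa • sE D + b • dE D - sE D))) + (sE D + (μ - (aa • sE D + b • dE D) - sE D)) = μ + dE D by abel,
      show (sE D + (aa • sE D + b • dE D - sE D)) + (sE D + (sE D + (μ - (aa • sE D + b • dE D) - sE D))) = μ + sE D by abel,
      show (sE D + (aa • sE D + b • dE D - sE D)) + (dE D + (sE D + (μ - (aa • sE D + b • dE D) - sE D))) = μ + dE D by abel,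
      show (sE D + (aa • sE D + b • dE D - sE D)) + (sE D + (μ - (aa • sE D + b • dE D) - sE D)) = μ by abel,
      hcc0, hcc1, hcc2]
    match_scalars <;> ring
  have hsum : ∀ bi : Fin 3,
      (∑ d : Fin 3, (((bi:ℕ):F))^(d:ℕ) • ![cc0, cc1, cc2] d) ∈ Gmod D α N := by
    intro bi
    have hs : (∑ d : Fin 3, (((bi:ℕ):F))^(d:ℕ) • ![cc0, cc1, cc2] d)
        = cc0 + ((bi:ℕ):F) • cc1 + (((bi:ℕ):F)^2) • cc2 := by
      rw [Fin.sum_univ_three]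
      norm_num
      rfl
    rw [hs, ← key (bi:ℕ)]
    have hγ₁1 : ((aa • sE D + (bi:ℕ) • dE D - sE D) : D.Γ).1 1 = 0 := by push_cast; simp
    have hγ₁3 : ((aa • sE D + (bi:ℕ) • dE D - sE D) : D.Γ).1 3 = 0 := by push_cast; simp
    have hγ₂1 : ((μ - (aa • sE D + (bi:ℕ) • dE D) - sE D) : D.Γ).1 1 = 0 := by push_cast; simp [hμ1]
    have hγ₂3 : ((μ - (aa • sE D + (bi:ℕ) • dE D) - sE D) : D.Γ).1 3 = 0 := by push_cast; simp [hμ3]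
    exact CL _ (Qe_mem_B D h2 _ hγ₁1 hγ₁3 0 (by simp) (by simp))
      (Qe_mem_V D _ hγ₁1 hγ₁3 0 (by simp) (by simp)) _
      (CL _ (Qe_mem_B D h2 _ hγ₂1 hγ₂3 0 (by simp) (by simp))
        (Qe_mem_V D _ hγ₂1 hγ₂3 0 (by simp) (by simp)) _ h1G)
  have hcc2m := vand_mem (Gmod D α N) ![cc0, cc1, cc2] hsum 2
  have hcc2m' : cc2 ∈ Gmod D α N := by simpa using hcc2m
  have hscal : (-(((aa:F) - 1) * (μ.1 0 - (aa:F) - 1) * (lam^2 * D.d3^2))) ≠ 0 := by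
    refine neg_ne_zero.mpr (mul_ne_zero (mul_ne_zero haa1 haa2) ?_)
    exact mul_ne_zero (pow_ne_zero _ hl) (pow_ne_zero _ D.d3_ne)
  have := Submodule.smul_mem (Gmod D α N)
    (-(((aa:F) - 1) * (μ.1 0 - (aa:F) - 1) * (lam^2 * D.d3^2)))⁻¹ hcc2m'
  rwa [hcc2, smul_smul, inv_mul_cancel₀ hscal, one_smul] at this

set_option maxHeartbeats 1000000 in
lemma stepB (D : Datum F) [CharZero F] (h2 : ∃ α ∈ D.Γ, α 1 ≠ 0) (h4 : ∃ α ∈ D.Γ, α 3 ≠ 0)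
    (eta lam : F) (hl : lam ≠ 0) (α : D.Γ) (hα1 : α.1 1 = eta) (hα3 : α.1 3 = lam)
    (N : Submodule F (Alg D))
    (hcl : ∀ w ∈ Bpart D 0 0, ∀ v ∈ N, br D w v ∈ N) (hXN : X D (α,0) ∈ N) :
    ∀ (ν : D.Γ) (k : ↥(Jmon D.m)), ν.1 1 = 0 → ν.1 3 = 0 → k.1 1 = 0 → k.1 3 = 0 →
      X D (ν, k) ∈ Gmod D α N := by
  have CL := G_CL D eta lam α hα1 hα3 N hcl
  have SA := stepA D h2 eta lam hl α hα1 hα3 N hcl hXN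
  suffices H : ∀ n : ℕ, ∀ (ν : D.Γ) (k : ↥(Jmon D.m)), ν.1 1 = 0 → ν.1 3 = 0 →
      k.1 1 = 0 → k.1 3 = 0 → k.1 0 + k.1 2 ≤ n → X D (ν,k) ∈ Gmod D α N by
    intro ν k hν1 hν3 hk1 hk3
    exact H (k.1 0 + k.1 2) ν k hν1 hν3 hk1 hk3 le_rfl
  intro n
  induction n with
  | zero =>
    intro ν k hν1 hν3 hk1 hk3 hkn
    have hk : k = 0 := by
      apply Subtype.ext; funext p
      fin_cases p <;> simp_all <;> omega
    rw [hk]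
    exact SA ν hν1 hν3
  | succ n ih =>
    intro ν k hν1 hν3 hk1 hk3 hkn
    by_cases hle : k.1 0 + k.1 2 ≤ n
    · exact ih ν k hν1 hν3 hk1 hk3 hle
    -- helper memberships
    have q0e : (subE k 2).1 0 = k.1 0 := subE_other k (by decide)
    have q2e : (subE k 2).1 2 = k.1 2 - 1 := subE_same k 2
    have s0e : (subE k 0).1 0 = k.1 0 - 1 := subE_same k 0
    have s2e : (subE k 0).1 2 = k.1 2 := subE_other k (by decide)
    set cc0 : Alg D := (2*eta*(k.1 0:F)) • X D (ν + sE D, subE k 0)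
      + (2*lam*(k.1 2:F)) • X D (ν + dE D, subE k 2)
      + (2*lam) • X D (ν, k)
      + ((k.1 2:F)*eta*(k.1 0:F)) • X D (ν + sE D + dE D, subE (subE k 2) 0)
      + ((k.1 2:F)*lam*D.d3) • X D (ν + 2 • dE D, subE k 2)
      + ((k.1 2:F)*lam*((subE k 2).1 2:F)) • X D (ν + 2 • dE D, subE (subE k 2) 2)
      + ((k.1 2:F)*lam) • X D (ν + dE D, subE k 2) with hcc0
    set cc1 : Alg D := (D.d3*eta*(k.1 0:F)) • X D (ν + sE D + dE D, subE k 0)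
      + (lam*D.d3^2) • X D (ν + 2 • dE D, k)
      + (D.d3*lam*(k.1 2:F)) • X D (ν + 2 • dE D, subE k 2)
      + (3*lam*D.d3) • X D (ν + dE D, k)
      + ((k.1 2:F)*lam*D.d3) • X D (ν + 2 • dE D, subE k 2) with hcc1
    set cc2 : Alg D := (lam*D.d3^2) • X D (ν + 2 • dE D, k) with hcc2
    have key : ∀ b : ℕ,
        mfun D eta lam (Pe D (b • dE D) k) * X D (ν - b • dE D, 0)
          = cc0 + (b:F) • cc1 + ((b:F)^2) • cc2 := by
      intro b
      have e2 : ((b • dE D : D.Γ)).1 2 = (b:F) * D.d3 := by push_cast; simp [nsmul_eq_mul]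
      have e0 : ((b • dE D : D.Γ)).1 0 = 0 := by push_cast; simp
      have f2 : ((dE D + b • dE D : D.Γ)).1 2 = D.d3 + (b:F) * D.d3 := by
        push_cast; simp [nsmul_eq_mul]
      have f0 : ((dE D + b • dE D : D.Γ)).1 0 = 0 := by push_cast; simp
      rw [Pe, mfun_add, mfun_add, mfun_smul, mfun_smul, mfun_smul, mfun_X, mfun_X, mfun_X]
      rw [e2, e0, f2, f0, q0e]
      simp only [Nat.cast_zero, zero_mul, mul_zero, zero_smul, add_zero, zero_add]
      simp only [add_mul, smul_mul_assoc, X_mul_X, Prod.mk_add_mk, add_zero]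
      rw [show (sE D + b • dE D) + (ν - b • dE D) = ν + sE D by abel,
        show (dE D + b • dE D) + (ν - b • dE D) = ν + dE D by abel,
        show (b • dE D) + (ν - b • dE D) = ν by abel,
        show (sE D + (dE D + b • dE D)) + (ν - b • dE D) = ν + sE D + dE D by abel,
        show (dE D + (dE D + b • dE D)) + (ν - b • dE D) = ν + 2 • dE D by abel,
        hcc0, hcc1, hcc2]
      match_scalars <;> ring
    have hsum : ∀ bi : Fin 3,
        (∑ d : Fin 3, (((bi:ℕ):F))^(d:ℕ) • ![cc0, cc1, cc2] d) ∈ Gmod D α N := by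
      intro bi
      have hs : (∑ d : Fin 3, (((bi:ℕ):F))^(d:ℕ) • ![cc0, cc1, cc2] d)
          = cc0 + ((bi:ℕ):F) • cc1 + (((bi:ℕ):F)^2) • cc2 := by
        rw [Fin.sum_univ_three]
        norm_num
        rfl
      rw [hs, ← key (bi:ℕ)]
      have d1 : ((bi:ℕ) • dE D : D.Γ).1 1 = 0 := by push_cast; simp
      have d3 : ((bi:ℕ) • dE D : D.Γ).1 3 = 0 := by push_cast; simp
      have n1 : ((ν - (bi:ℕ) • dE D : D.Γ)).1 1 = 0 := by push_cast; simp [hν1]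
      have n3 : ((ν - (bi:ℕ) • dE D : D.Γ)).1 3 = 0 := by push_cast; simp [hν3]
      exact CL _ (Pe_mem_B D h2 h4 _ d1 d3 k hk1 hk3) (Pe_mem_V D _ d1 d3 k hk1 hk3) _
        (SA _ n1 n3)
    have hcc0m : cc0 ∈ Gmod D α N := by
      have := vand_mem (Gmod D α N) ![cc0, cc1, cc2] hsum 0
      simpa using this
    -- peel off the lower-order terms
    have hT : ∀ (c : F) (x y : D.Γ) (k' : ↥(Jmon D.m)), x.1 1 = 0 → x.1 3 = 0 →
        (c = 0 ∨ (k'.1 1 = 0 ∧ k'.1 3 = 0 ∧ k'.1 0 + k'.1 2 ≤ n ∧ y = x)) →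
        c • X D (y, k') ∈ Gmod D α N := by
      intro c x y k' hx1 hx3 hc
      rcases hc with hc | ⟨h1', h3', hn', rfl⟩
      · rw [hc, zero_smul]; exact zero_mem _
      · exact Submodule.smul_mem _ _ (ih _ _ hx1 hx3 h1' h3' hn')
    have c1s : (ν + sE D).1 1 = 0 := by rw [sum_coord1]; simp [hν1]
    have c3s : (ν + sE D).1 3 = 0 := by rw [sum_coord3]; simp [hν3]
    have c1d : (ν + dE D).1 1 = 0 := by rw [sum_coord1]; simp [hν1]
    have c3d : (ν + dE D).1 3 = 0 := by rw [sum_coord3]; simp [hν3]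
    have c1sd : (ν + sE D + dE D).1 1 = 0 := by rw [sum_coord1]; simp [c1s]
    have c3sd : (ν + sE D + dE D).1 3 = 0 := by rw [sum_coord3]; simp [c3s]
    have c1dd : (ν + 2 • dE D).1 1 = 0 := by push_cast; simp [hν1]
    have c3dd : (ν + 2 • dE D).1 3 = 0 := by push_cast; simp [hν3]
    have T1 : (2*eta*(k.1 0:F)) • X D (ν + sE D, subE k 0) ∈ Gmod D α N := by
      refine hT _ (ν + sE D) _ _ c1s c3s ?_
      rcases Nat.eq_zero_or_pos (k.1 0) with h | h
      · exact Or.inl (by simp [h])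
      · exact Or.inr ⟨subE_1 hk1 0, subE_3 hk3 0, by omega, rfl⟩
    have T2 : (2*lam*(k.1 2:F)) • X D (ν + dE D, subE k 2) ∈ Gmod D α N := by
      refine hT _ (ν + dE D) _ _ c1d c3d ?_
      rcases Nat.eq_zero_or_pos (k.1 2) with h | h
      · exact Or.inl (by simp [h])
      · exact Or.inr ⟨subE_1 hk1 2, subE_3 hk3 2, by omega, rfl⟩
    have T4 : ((k.1 2:F)*eta*(k.1 0:F)) • X D (ν + sE D + dE D, subE (subE k 2) 0) ∈ Gmod D α N := by
      refine hT _ (ν + sE D + dE D) _ _ c1sd c3sd ?_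
      rcases Nat.eq_zero_or_pos (k.1 0) with h | h
      · exact Or.inl (by simp [h])
      rcases Nat.eq_zero_or_pos (k.1 2) with h' | h'
      · exact Or.inl (by simp [h'])
      · refine Or.inr ⟨subE_1 (subE_1 hk1 2) 0, subE_3 (subE_3 hk3 2) 0, ?_, rfl⟩
        have e1 : (subE (subE k 2) 0).1 0 = k.1 0 - 1 := by
          rw [subE_same, q0e]
        have e2 : (subE (subE k 2) 0).1 2 = k.1 2 - 1 := by
          rw [subE_other _ (by decide), q2e]
        omega
    have T5 : ((k.1 2:F)*lam*D.d3) • X D (ν + 2 • dE D, subE k 2) ∈ Gmod D α N := by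
      refine hT _ (ν + 2 • dE D) _ _ c1dd c3dd ?_
      rcases Nat.eq_zero_or_pos (k.1 2) with h | h
      · exact Or.inl (by simp [h])
      · exact Or.inr ⟨subE_1 hk1 2, subE_3 hk3 2, by omega, rfl⟩
    have T6 : ((k.1 2:F)*lam*((subE k 2).1 2:F)) • X D (ν + 2 • dE D, subE (subE k 2) 2)
        ∈ Gmod D α N := by
      refine hT _ (ν + 2 • dE D) _ _ c1dd c3dd ?_
      rcases Nat.lt_or_ge (k.1 2) 2 with h | h
      · refine Or.inl ?_
        rcases (by omega : k.1 2 = 0 ∨ k.1 2 = 1) with h0 | h1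
        · simp [h0]
        · rw [q2e, h1]
          norm_num
      · refine Or.inr ⟨subE_1 (subE_1 hk1 2) 2, subE_3 (subE_3 hk3 2) 2, ?_, rfl⟩
        have e2 : (subE (subE k 2) 2).1 2 = k.1 2 - 2 := by
          rw [subE_same, q2e]; omega
        have e0 : (subE (subE k 2) 2).1 0 = k.1 0 := by
          rw [subE_other _ (by decide), q0e]
        omega
    have T7 : ((k.1 2:F)*lam) • X D (ν + dE D, subE k 2) ∈ Gmod D α N := by
      refine hT _ (ν + dE D) _ _ c1d c3d ?_
      rcases Nat.eq_zero_or_pos (k.1 2) with h | h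
      · exact Or.inl (by simp [h])
      · exact Or.inr ⟨subE_1 hk1 2, subE_3 hk3 2, by omega, rfl⟩
    have hXfin : (2*lam) • X D (ν, k) ∈ Gmod D α N := by
      have he : (2*lam) • X D (ν, k)
          = cc0 - ((2*eta*(k.1 0:F)) • X D (ν + sE D, subE k 0)
            + (2*lam*(k.1 2:F)) • X D (ν + dE D, subE k 2)
            + ((k.1 2:F)*eta*(k.1 0:F)) • X D (ν + sE D + dE D, subE (subE k 2) 0)
            + ((k.1 2:F)*lam*D.d3) • X D (ν + 2 • dE D, subE k 2)
            + ((k.1 2:F)*lam*((subE k 2).1 2:F)) • X D (ν + 2 • dE D, subE (subE k 2) 2)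
            + ((k.1 2:F)*lam) • X D (ν + dE D, subE k 2)) := by
        rw [hcc0]; abel
      rw [he]
      exact sub_mem hcc0m (add_mem (add_mem (add_mem (add_mem (add_mem T1 T2) T4) T5) T6) T7)
    have := Submodule.smul_mem (Gmod D α N) (2*lam)⁻¹ hXfin
    rwa [smul_smul, inv_mul_cancel₀ (mul_ne_zero two_ne_zero hl), one_smul] at this

set_option maxHeartbeats 1000000 in
lemma stepA0 (D : Datum F) [CharZero F] (h2 : ∃ α ∈ D.Γ, α 1 ≠ 0)
    (eta lam : F) (hl : lam = 0) (he : eta ≠ 0) (α : D.Γ) (hα1 : α.1 1 = eta) (hα3 : α.1 3 = lam)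
    (N : Submodule F (Alg D))
    (hcl : ∀ w ∈ Bpart D 0 0, ∀ v ∈ N, br D w v ∈ N) (hXN : X D (α,0) ∈ N) :
    ∀ ν : D.Γ, ν.1 1 = 0 → ν.1 3 = 0 → X D (ν, 0) ∈ Gmod D α N := by
  have CL := G_CL D eta lam α hα1 hα3 N hcl
  have h1G := G_one D α N hXN
  intro ν hν1 hν3
  set cc1 : Alg D := (eta^2*(ν.1 0^2 - 7*ν.1 0 + 12)) • X D (ν, 0) with hc1
  set cc2 : Alg D := (eta^2*(ν.1 0^2 - 9*ν.1 0 + 19)) • X D (ν, 0) with hc2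
  set cc3 : Alg D := (eta^2*(8 - 2*ν.1 0)) • X D (ν, 0) with hc3
  set cc4 : Alg D := (eta^2) • X D (ν, 0) with hc4
  have key : ∀ a : ℕ,
      mfun D eta lam (Qe D (a • sE D) 0) *
        (mfun D eta lam (Qe D (ν - 4 • sE D - a • sE D) 0) * 1)
      = (a:F) • cc1 + ((a:F)^2) • cc2 + ((a:F)^3) • cc3 + ((a:F)^4) • cc4 := by
    intro a
    have e1 : ((a • sE D : D.Γ)).1 0 = (a:F) := by push_cast; simp [nsmul_eq_mul]
    have e2 : ((ν - 4 • sE D - a • sE D : D.Γ)).1 0 = ν.1 0 - 4 - (a:F) := by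
      push_cast; simp [nsmul_eq_mul]; try ring
    have f1 : ((sE D + a • sE D : D.Γ)).1 0 = (a:F) + 1 := by
      push_cast; simp [nsmul_eq_mul]; try ring
    have f2 : ((sE D + (ν - 4 • sE D - a • sE D) : D.Γ)).1 0 = ν.1 0 - 3 - (a:F) := by
      push_cast; simp [nsmul_eq_mul]; try ring
    rw [Qe_zero_k, Qe_zero_k, mfun_smul, mfun_smul, mfun_X, mfun_X, mul_one]
    rw [e1, e2, f1, f2, hl]
    simp only [J0_coord, Nat.cast_zero, mul_zero, zero_mul, zero_smul, add_zero, zero_add]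
    simp only [smul_mul_assoc, mul_smul_comm, smul_smul, X_mul_X, Prod.mk_add_mk, add_zero]
    rw [show (sE D + (sE D + (a • sE D))) + (sE D + (sE D + (ν - 4 • sE D - a • sE D))) = ν by
      abel, hc1, hc2, hc3, hc4]
    match_scalars <;> ring
  have hsum : ∀ bi : Fin 5,
      (∑ d : Fin 5, (((bi:ℕ):F))^(d:ℕ) • ![(0:Alg D), cc1, cc2, cc3, cc4] d) ∈ Gmod D α N := by
    intro bi
    have hs : (∑ d : Fin 5, (((bi:ℕ):F))^(d:ℕ) • ![(0:Alg D), cc1, cc2, cc3, cc4] d)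
        = ((bi:ℕ):F) • cc1 + (((bi:ℕ):F)^2) • cc2 + (((bi:ℕ):F)^3) • cc3
          + (((bi:ℕ):F)^4) • cc4 := by
      rw [Fin.sum_univ_five]
      norm_num [show ((3:Fin 5):ℕ) = 3 from rfl, show ((4:Fin 5):ℕ) = 4 from rfl]
      rfl
    rw [hs, ← key (bi:ℕ)]
    have a1 : (((bi:ℕ) • sE D : D.Γ)).1 1 = 0 := by push_cast; simp
    have a3 : (((bi:ℕ) • sE D : D.Γ)).1 3 = 0 := by push_cast; simp
    have b1 : ((ν - 4 • sE D - (bi:ℕ) • sE D : D.Γ)).1 1 = 0 := by push_cast; simp [hν1]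
    have b3 : ((ν - 4 • sE D - (bi:ℕ) • sE D : D.Γ)).1 3 = 0 := by push_cast; simp [hν3]
    exact CL _ (Qe_mem_B D h2 _ a1 a3 0 (by simp) (by simp))
      (Qe_mem_V D _ a1 a3 0 (by simp) (by simp)) _
      (CL _ (Qe_mem_B D h2 _ b1 b3 0 (by simp) (by simp))
        (Qe_mem_V D _ b1 b3 0 (by simp) (by simp)) _ h1G)
  have hc4m : cc4 ∈ Gmod D α N := by
    have := vand_mem (Gmod D α N) ![(0:Alg D), cc1, cc2, cc3, cc4] hsum 4
    simpa using this
  have := Submodule.smul_mem (Gmod D α N) (eta^2)⁻¹ hc4m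
  rwa [hc4, smul_smul, inv_mul_cancel₀ (pow_ne_zero _ he), one_smul] at this

set_option maxHeartbeats 1000000 in
lemma stepB0 (D : Datum F) [CharZero F] (h2 : ∃ α ∈ D.Γ, α 1 ≠ 0)
    (eta lam : F) (hl : lam = 0) (he : eta ≠ 0) (α : D.Γ) (hα1 : α.1 1 = eta) (hα3 : α.1 3 = lam)
    (N : Submodule F (Alg D))
    (hcl : ∀ w ∈ Bpart D 0 0, ∀ v ∈ N, br D w v ∈ N) (hXN : X D (α,0) ∈ N) :
    ∀ (ν : D.Γ) (k : ↥(Jmon D.m)), ν.1 1 = 0 → ν.1 3 = 0 → k.1 1 = 0 → k.1 3 = 0 →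
      X D (ν, k) ∈ Gmod D α N := by
  have CL := G_CL D eta lam α hα1 hα3 N hcl
  have SA := stepA0 D h2 eta lam hl he α hα1 hα3 N hcl hXN
  intro ν k hν1 hν3 hk1 hk3
  set cc0 : Alg D := (eta*(k.1 0:F)) • X D (ν, subE k 0)
    + (eta*(k.1 0:F)*((subE k 0).1 0:F)) • X D (ν, subE (subE k 0) 0) with hc0
  set cc1 : Alg D := eta • X D (ν, k) + (2*eta*(k.1 0:F)) • X D (ν, subE k 0) with hc1
  set cc2 : Alg D := eta • X D (ν, k) with hc2
  have key : ∀ a : ℕ,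
      mfun D eta lam (Qe D (a • sE D) k) * X D (ν - a • sE D - 2 • sE D, 0)
      = cc0 + (a:F) • cc1 + ((a:F)^2) • cc2 := by
    intro a
    have e1 : ((a • sE D : D.Γ)).1 0 = (a:F) := by push_cast; simp [nsmul_eq_mul]
    have f1 : ((sE D + a • sE D : D.Γ)).1 0 = (a:F) + 1 := by
      push_cast; simp [nsmul_eq_mul]; try ring
    rw [Qe, mfun_add, mfun_smul, mfun_smul, mfun_X, mfun_X]
    rw [e1, f1, hl]
    simp only [zero_mul, zero_smul, add_zero, zero_add]
    simp only [add_mul, smul_mul_assoc, smul_smul, X_mul_X, Prod.mk_add_mk, add_zero]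
    rw [show (sE D + (sE D + (a • sE D))) + (ν - a • sE D - 2 • sE D) = ν by abel,
      hc0, hc1, hc2]
    match_scalars <;> ring
  have hsum : ∀ bi : Fin 3,
      (∑ d : Fin 3, (((bi:ℕ):F))^(d:ℕ) • ![cc0, cc1, cc2] d) ∈ Gmod D α N := by
    intro bi
    have hs : (∑ d : Fin 3, (((bi:ℕ):F))^(d:ℕ) • ![cc0, cc1, cc2] d)
        = cc0 + ((bi:ℕ):F) • cc1 + (((bi:ℕ):F)^2) • cc2 := by
      rw [Fin.sum_univ_three]
      norm_num
      rfl
    rw [hs, ← key (bi:ℕ)]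
    have a1 : (((bi:ℕ) • sE D : D.Γ)).1 1 = 0 := by push_cast; simp
    have a3 : (((bi:ℕ) • sE D : D.Γ)).1 3 = 0 := by push_cast; simp
    have b1 : ((ν - (bi:ℕ) • sE D - 2 • sE D : D.Γ)).1 1 = 0 := by push_cast; simp [hν1]
    have b3 : ((ν - (bi:ℕ) • sE D - 2 • sE D : D.Γ)).1 3 = 0 := by push_cast; simp [hν3]
    exact CL _ (Qe_mem_B D h2 _ a1 a3 k hk1 hk3) (Qe_mem_V D _ a1 a3 k hk1 hk3) _
      (SA _ b1 b3)
  have hc2m : cc2 ∈ Gmod D α N := by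
    have := vand_mem (Gmod D α N) ![cc0, cc1, cc2] hsum 2
    simpa using this
  have := Submodule.smul_mem (Gmod D α N) eta⁻¹ hc2m
  rwa [hc2, smul_smul, inv_mul_cancel₀ he, one_smul] at this

lemma main_gen (D : Datum F) [CharZero F] (h2 : ∃ α ∈ D.Γ, α 1 ≠ 0) (h4 : ∃ α ∈ D.Γ, α 3 ≠ 0)
    (eta lam : F) (hne : ¬(eta = 0 ∧ lam = 0)) (α : D.Γ) (hα1 : α.1 1 = eta) (hα3 : α.1 3 = lam)
    (N : Submodule F (Alg D))
    (hcl : ∀ w ∈ Bpart D 0 0, ∀ v ∈ N, br D w v ∈ N) (hXN : X D (α,0) ∈ N) :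
    ∀ (β : D.Γ) (i : ↥(Jmon D.m)), β.1 1 = eta → β.1 3 = lam → i.1 1 = 0 → i.1 3 = 0 →
      X D (β, i) ∈ N := by
  intro β i hβ1 hβ3 hi1 hi3
  have c1 : (β - α : D.Γ).1 1 = 0 := by push_cast; simp [hβ1, hα1]
  have c3 : (β - α : D.Γ).1 3 = 0 := by push_cast; simp [hβ3, hα3]
  have hXk : X D (β - α, i) ∈ Gmod D α N := by
    by_cases hl : lam = 0
    · exact stepB0 D h2 eta lam hl (fun h => hne ⟨h, hl⟩) α hα1 hα3 N hcl hXN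
        (β - α) i c1 c3 hi1 hi3
    · exact stepB D h2 h4 eta lam hl α hα1 hα3 N hcl hXN (β - α) i c1 c3 hi1 hi3
  have hfin := G_N D α N hXk
  rwa [X_mul_X, Prod.mk_add_mk, show α + (β - α) = β by abel, zero_add] at hfin

set_option maxHeartbeats 1000000 in
theorem Bpart_cyclic' (F : Type*) [Field F] [CharZero F] (D : Datum F)
    (h2 : ∃ α ∈ D.Γ, α 1 ≠ 0) (h4 : ∃ α ∈ D.Γ, α 3 ≠ 0) (eta lam : F) :
    (∀ u ∈ Bpart D 0 0, ∀ v ∈ Bpart D 0 0, br D u v = 0) ∧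
    (∀ u ∈ Bpart D 0 0, ∀ v ∈ Bpart D eta lam, br D u v ∈ Bpart D eta lam) ∧
    (((eta, lam) : F × F) ≠ (0, 0) → (∃ α₀ ∈ D.Γ, α₀ 1 = eta ∧ α₀ 3 = lam) →
      ∀ u ∈ Bpart D eta lam,
        ((∀ N : Submodule F (Alg D),
            (∀ w ∈ Bpart D 0 0, ∀ v ∈ N, br D w v ∈ N) → u ∈ N → Bpart D eta lam ≤ N)
          ↔ ∃ c : F, c ≠ 0 ∧ ∃ α : D.Γ, α.1 1 = eta ∧ α.1 3 = lam ∧ u = c • X D (α, 0))) := by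
  classical
  refine ⟨?_, ?_, ?_⟩
  · intro u hu v hv
    exact br_V00 D hu.2 hv.2
  · intro u hu v hv
    refine ⟨Submodule.subset_span ⟨u, v, rfl⟩, ?_⟩
    show br D u v ∈ spanV D eta lam
    rw [br_eq_mfun_mul D eta lam hu.2 hv.2]
    have := mul_V D (mfun_mem D eta lam hu.2) hv.2
    simpa using this
  · intro hne hwit u hu
    have hne' : ¬(eta = 0 ∧ lam = 0) := fun h => hne (by rw [h.1, h.2])
    constructor
    · intro hLHS
      obtain ⟨α₀v, hα₀Γ, hα₀1, hα₀3⟩ := hwit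
      set α₀ : D.Γ := ⟨α₀v, hα₀Γ⟩ with hα₀
      have hα₀1' : α₀.1 1 = eta := hα₀1
      have hα₀3' : α₀.1 3 = lam := hα₀3
      set N₀ : Submodule F (Alg D) :=
        Submodule.map (LinearMap.mulLeft F u) (spanV D 0 0) with hN₀
      have hclosed : ∀ w ∈ Bpart D 0 0, ∀ v ∈ N₀, br D w v ∈ N₀ := by
        intro w hw v hv
        obtain ⟨a, ha, rfl⟩ := hv
        have huV : u ∈ spanV D eta lam := hu.2
        have huaV : LinearMap.mulLeft F u a ∈ spanV D eta lam := by
          rw [LinearMap.mulLeft_apply]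
          have := mul_V D huV ha
          simpa using this
        have hbr : br D w (LinearMap.mulLeft F u a)
            = LinearMap.mulLeft F u (mfun D eta lam w * a) := by
          rw [br_eq_mfun_mul D eta lam hw.2 huaV, LinearMap.mulLeft_apply,
            LinearMap.mulLeft_apply]
          ring
        rw [hbr]
        exact Submodule.mem_map_of_mem (by simpa using mul_V D (mfun_mem D eta lam hw.2) ha)
      have huN₀ : u ∈ N₀ := by
        refine ⟨1, X_mem_V D 0 0 (by simp) (by simp) rfl rfl, ?_⟩
        simp
      have hXB : X D (α₀, 0) ∈ Bpart D eta lam :=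
        ⟨Xmono_mem_B D α₀ eta lam hα₀1' hα₀3' hne', X_mem_V D α₀ 0 hα₀1' hα₀3' rfl rfl⟩
      obtain ⟨a, haV, hxa⟩ := hLHS N₀ hclosed huN₀ hXB
      rw [LinearMap.mulLeft_apply] at hxa
      have hXne : X D (α₀, 0) ≠ 0 := by
        simp [X, AddMonoidAlgebra.single_eq_zero]
      have hu0 : u ≠ 0 := by
        rintro rfl
        rw [zero_mul] at hxa
        exact hXne hxa.symm
      have hcard : u.coeff.support.card ≤ 1 := by
        by_contra hcge
        push_neg at hcge
        exact mul_ne_single D hcge one_ne_zero hxa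
      have hcard1 : u.coeff.support.card = 1 := by
        have : u.coeff.support.Nonempty := Finsupp.support_nonempty_iff.mpr
            (by rwa [Ne, ← AddMonoidAlgebra.coeff_inj, AddMonoidAlgebra.coeff_zero] at hu0)
        have := Finset.card_pos.mpr this
        omega
      obtain ⟨⟨β, j⟩, c', hc', hueq⟩ := Finsupp.card_support_eq_one'.mp hcard1
      have hgsupp : (β, j) ∈ u.coeff.support := by
        rw [hueq]
        simp [Finsupp.support_single_ne_zero _ hc']
      obtain ⟨p1, p3, pj1, pj3⟩ := supp_V D eta lam hu.2 _ hgsupp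
      have hj0 : j = 0 := by
        have hmem : ((α₀, (0 : ↥(Jmon D.m)))) ∈ (u * a).coeff.support := by
          rw [hxa]
          simp [X, AddMonoidAlgebra.coeff_single, Finsupp.support_single_ne_zero _ one_ne_zero]
        have hsub := AddMonoidAlgebra.support_coeff_mul_subset u a hmem
        rw [Finset.mem_add] at hsub
        obtain ⟨p, hp, q, hq, hpq⟩ := hsub
        have hpg : p = (β, j) := by
          have : p ∈ u.coeff.support := hp
          rw [hueq, Finsupp.support_single_ne_zero _ hc', Finset.mem_singleton] at this
          exact this
        rw [hpg] at hpq
        have hsnd : j + q.2 = 0 := congrArg Prod.snd hpq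
        apply Subtype.ext
        funext r
        have h' : j.1 r + q.2.1 r = 0 := by
          have := congrArg (fun z => z.1 r) hsnd
          push_cast at this
          simpa using this
        rw [J0_coord]
        omega
      refine ⟨c', hc', ⟨β, p1, p3, ?_⟩⟩
      rw [← AddMonoidAlgebra.coeff_inj, hueq, hj0, X, AddMonoidAlgebra.coeff_smul,
        AddMonoidAlgebra.coeff_single]
      rw [Finsupp.smul_single]
      simp
    · rintro ⟨c, hc, α', hα'1, hα'3, rfl⟩ N hclosed huN
      have hXN : X D (α', 0) ∈ N := by
        have := N.smul_mem c⁻¹ huN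
        rwa [smul_smul, inv_mul_cancel₀ hc, one_smul] at this
      have hgen := main_gen D h2 h4 eta lam hne' α' hα'1 hα'3 N hclosed hXN
      refine le_trans inf_le_right (Submodule.span_le.mpr ?_)
      rintro w ⟨β, i, q1, q3, qi1, qi3, rfl⟩
      exact hgen β i q1 q3 qi1 qi3

end Aux

/-- Claim 3: assume `π₂ ≠ 0` and `π₄ ≠ 0`.  Then `B_{0,0}` is an abelian
Lie subalgebra, each `B_{η,λ}` is a `B_{0,0}`-module under the adjoint action, and for
`(η,λ) ≠ (0,0)` in the image of `α ↦ (α₂,α₄)` the module `B_{η,λ}` is cyclic, its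
generators being exactly the nonzero scalar multiples of the `x^{α,0}` with
`(α₂,α₄) = (η,λ)`. -/
theorem Bpart_cyclic (F : Type*) [Field F] [CharZero F] [IsAlgClosed F] (D : Datum F)
    (h2 : ∃ α ∈ D.Γ, α 1 ≠ 0) (h4 : ∃ α ∈ D.Γ, α 3 ≠ 0) (eta lam : F) :
    (∀ u ∈ Bpart D 0 0, ∀ v ∈ Bpart D 0 0, br D u v = 0) ∧
    (∀ u ∈ Bpart D 0 0, ∀ v ∈ Bpart D eta lam, br D u v ∈ Bpart D eta lam) ∧
    (((eta, lam) : F × F) ≠ (0, 0) → (∃ α₀ ∈ D.Γ, α₀ 1 = eta ∧ α₀ 3 = lam) →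
      ∀ u ∈ Bpart D eta lam,
        ((∀ N : Submodule F (Alg D),
            (∀ w ∈ Bpart D 0 0, ∀ v ∈ N, br D w v ∈ N) → u ∈ N → Bpart D eta lam ≤ N)
          ↔ ∃ c : F, c ≠ 0 ∧ ∃ α : D.Γ, α.1 1 = eta ∧ α.1 3 = lam ∧ u = c • X D (α, 0))) := by
  exact Bpart_cyclic' F D h2 h4 eta lam

end SuBlock
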